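/- Order-zero duality (generalizing Jaeger): let (X,R) be a translation association scheme on a finite abelian group X, and let \(\mathsf{S}\) be an order-0 scaffold (a scalar) on a weakly connected plane digraph G with n nodes and edge weights among \(A_0,\dots,A_d\). Then \(\mathsf{S} = |X|^{\,n-1}\,\mathsf{S}^\dagger\), where \(\mathsf{S}^\dagger\) is the order-0 scaffold on the planar dual digraph \(G^\dagger\) (dual edges rotated 90° clockwise) over the dual translation scheme \((X^*, R^*)\), with each weight \(A_i\) replaced by the dual primitive idempotent \(E_i^*\). -/

import Mathlib

open scoped ComplexConjugate


open Finset

namespace Stmt18Aux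

variable {C : Type*} [CommGroup C] [Fintype C] [DecidableEq C]
variable {V E F : Type*} [Fintype V] [Fintype E] [Fintype F]
  [DecidableEq V] [DecidableEq E] [DecidableEq F]

lemma comm_helper (a b c : C) : a * c⁻¹ * (b * a⁻¹) = b * c⁻¹ := by
  rw [mul_comm a c⁻¹, mul_mul_mul_comm, mul_comm c⁻¹ b, mul_assoc]
  simp

def Phi (eh et : E → V) : (E → C) →* (V → C) where
  toFun ε := fun v => (∏ e ∈ univ.filter fun e => eh e = v, ε e) *
      (∏ e ∈ univ.filter fun e => et e = v, ε e)⁻¹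
  map_one' := by funext v; simp
  map_mul' a b := by
    funext v
    simp only [Pi.mul_apply, prod_mul_distrib, mul_inv]
    exact mul_mul_mul_comm _ _ _ _

def DD (fh ft : E → F) : (F → C) →* (E → C) where
  toFun μ := fun e => μ (fh e) * (μ (ft e))⁻¹
  map_one' := by funext e; simp
  map_mul' a b := by
    funext e
    simp only [Pi.mul_apply, mul_inv]
    exact mul_mul_mul_comm _ _ _ _

def PP (V : Type*) [Fintype V] (C : Type*) [CommGroup C] : (V → C) →* C where
  toFun f := ∏ v, f v
  map_one' := by simp
  map_mul' a b := by simp [prod_mul_distrib]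

lemma phi_mulSingle (eh et : E → V) (e : E) (c : C) :
    Phi (C := C) eh et (Pi.mulSingle e c) =
      fun v => (if v = eh e then c else 1) * (if v = et e then c else 1)⁻¹ := by
  funext v
  have h1 : ∀ (g : E → V), (∏ e' ∈ univ.filter fun e' => g e' = v, Pi.mulSingle e c e')
      = if v = g e then c else 1 := by
    intro g
    simp only [Pi.mulSingle_apply]
    rw [prod_ite_eq' (univ.filter fun e' => g e' = v) e fun _ => c]
    simp [eq_comm]
  simp only [Phi, MonoidHom.coe_mk, OneHom.coe_mk, h1]

/-- dipole -/
def dip (u w : V) (c : C) : V → C :=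
  fun v => (if v = w then c else 1) * (if v = u then c else 1)⁻¹

lemma dip_mem_range (eh et : E → V) (u w : V)
    (h : Relation.ReflTransGen
      (fun a b => ∃ e, (et e = a ∧ eh e = b) ∨ (et e = b ∧ eh e = a)) u w) (c : C) :
    dip u w c ∈ (Phi (C := C) eh et).range := by
  induction h with
  | refl =>
    have : dip u u c = (1 : V → C) := by
      funext v; simp [dip]
    rw [this]; exact one_mem _
  | tail _ hadj ih =>
    rename_i b w' _
    have hsplit : dip u w' c = dip u b c * dip b w' c := by
      funext v
      simp only [dip, Pi.mul_apply]
      exact (comm_helper _ _ _).symm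
    rw [hsplit]
    refine mul_mem ih ?_
    have h4 : ∀ (P : Prop) [Decidable P], (if P then c⁻¹ else 1) = (if P then c else 1)⁻¹ := by
      intros P hP; split <;> simp
    obtain ⟨e, he⟩ := hadj
    rcases he with ⟨h1, h2⟩ | ⟨h1, h2⟩
    · refine ⟨Pi.mulSingle e c, ?_⟩
      rw [phi_mulSingle, h1, h2]; rfl
    · refine ⟨Pi.mulSingle e c⁻¹, ?_⟩
      rw [phi_mulSingle, h1, h2]
      funext v
      simp only [dip]
      rw [h4, h4, inv_inv, mul_comm]

lemma range_phi (eh et : E → V)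
    (hGconn : ∀ a b : V, Relation.ReflTransGen
      (fun a b => ∃ e, (et e = a ∧ eh e = b) ∨ (et e = b ∧ eh e = a)) a b)
    (v0 : V) :
    (Phi (C := C) eh et).range = (PP V C).ker := by
  apply le_antisymm
  · rintro _ ⟨ε, rfl⟩
    simp only [MonoidHom.mem_ker, PP, Phi, MonoidHom.coe_mk, OneHom.coe_mk]
    rw [prod_mul_distrib, prod_inv_distrib]
    rw [prod_fiberwise_of_maps_to (fun e _ => mem_univ (eh e)) ε]
    rw [prod_fiberwise_of_maps_to (fun e _ => mem_univ (et e)) ε]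
    simp
  · intro f hf
    have hf' : ∏ v, f v = 1 := hf
    have hdec : f = ∏ w : V, dip v0 w (f w) := by
      funext v
      rw [Finset.prod_apply]
      simp only [dip]
      rw [prod_mul_distrib, prod_inv_distrib, prod_ite_eq univ v f, if_pos (mem_univ v)]
      have h2 : (∏ x : V, if v = v0 then f x else 1) = 1 := by
        by_cases h : v = v0 <;> simp [h, hf']
      rw [h2]
      simp
    rw [hdec]
    exact prod_mem fun w _ => dip_mem_range eh et v0 w (hGconn v0 w) (f w)


lemma ker_DD_const {fh ft : E → F} {μ : F → C} (hμ : μ ∈ (DD (C := C) fh ft).ker)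
    {a b : F} (h : Relation.ReflTransGen
      (fun a b => ∃ e, (ft e = a ∧ fh e = b) ∨ (ft e = b ∧ fh e = a)) a b) :
    μ a = μ b := by
  have he : ∀ e, μ (fh e) = μ (ft e) := by
    intro e
    have h2 := congrFun (MonoidHom.mem_ker.mp hμ) e
    simp only [DD, MonoidHom.coe_mk, OneHom.coe_mk, Pi.one_apply] at h2
    exact mul_inv_eq_one.mp h2
  induction h with
  | refl => rfl
  | tail _ hadj ih =>
      obtain ⟨e, hh⟩ := hadj
      rcases hh with ⟨h1, h2⟩ | ⟨h1, h2⟩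
      · rw [ih, ← h1, ← he e, h2]
      · rw [ih, ← h2, he e, h1]

lemma ker_DD_card (fh ft : E → F)
    (hDconn : ∀ a b : F, Relation.ReflTransGen
      (fun a b => ∃ e, (ft e = a ∧ fh e = b) ∨ (ft e = b ∧ fh e = a)) a b)
    (f0 : F) :
    Nat.card (DD (C := C) fh ft).ker = Nat.card C := by
  refine Nat.card_eq_of_bijective (fun μ => (μ : F → C) f0) ⟨?_, ?_⟩
  · rintro ⟨μ, hμ⟩ ⟨ν, hν⟩ h
    ext f
    calc μ f = μ f0 := ker_DD_const hμ (hDconn f f0)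
    _ = ν f0 := h
    _ = ν f := ker_DD_const hν (hDconn f0 f)
  · intro c
    refine ⟨⟨fun _ => c, ?_⟩, rfl⟩
    rw [MonoidHom.mem_ker]
    funext e
    simp [DD]

lemma range_DD_le (eh et : E → V) (fh ft : E → F)
    (hcirc : ∀ (μ : F → C) (v : V),
      (∏ e ∈ univ.filter fun e => eh e = v, μ (fh e) * (μ (ft e))⁻¹)⁻¹ *
        ∏ e ∈ univ.filter fun e => et e = v, μ (fh e) * (μ (ft e))⁻¹ = 1) :
    (DD (C := C) fh ft).range ≤ (Phi (C := C) eh et).ker := by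
  rintro _ ⟨μ, rfl⟩
  rw [MonoidHom.mem_ker]
  funext v
  have h2 := hcirc μ v
  simp only [Phi, DD, MonoidHom.coe_mk, OneHom.coe_mk, Pi.one_apply]
  exact mul_inv_eq_one.mpr (inv_mul_eq_one.mp h2)

lemma range_PP (v0 : V) : (PP V C).range = ⊤ := by
  rw [MonoidHom.range_eq_top]
  intro c
  refine ⟨Pi.mulSingle v0 c, ?_⟩
  simp only [PP, MonoidHom.coe_mk, OneHom.coe_mk, Pi.mulSingle_apply]
  rw [prod_ite_eq' univ v0 fun _ => c]
  simp

lemma range_DD_eq (eh et : E → V) (fh ft : E → F)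
    (hGconn : ∀ a b : V, Relation.ReflTransGen
      (fun u w => ∃ e, (et e = u ∧ eh e = w) ∨ (et e = w ∧ eh e = u)) a b)
    (hDconn : ∀ a b : F, Relation.ReflTransGen
      (fun u w => ∃ e, (ft e = u ∧ fh e = w) ∨ (ft e = w ∧ fh e = u)) a b)
    (hcirc : ∀ (μ : F → C) (v : V),
      (∏ e ∈ univ.filter fun e => eh e = v, μ (fh e) * (μ (ft e))⁻¹)⁻¹ *
        ∏ e ∈ univ.filter fun e => et e = v, μ (fh e) * (μ (ft e))⁻¹ = 1)
    (hEuler : (Fintype.card V : ℤ) - Fintype.card E + Fintype.card F = 2) :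
    (DD (C := C) fh ft).range = (Phi (C := C) eh et).ker := by
  have hV : Nonempty V := by
    by_contra h
    rw [not_nonempty_iff] at h
    have hE : IsEmpty E := ⟨fun e => h.false (et e)⟩
    have hF : ∀ a b : F, a = b := by
      intro a b
      have h3 := (Relation.reflTransGen_iff_eq
        (fun b h => by obtain ⟨e, _⟩ := h; exact hE.false e)).mp (hDconn a b)
      exact h3.symm
    have h2 : Fintype.card F ≤ 1 := Fintype.card_le_one_iff.mpr hF
    have h0 : Fintype.card V = 0 := Fintype.card_eq_zero
    have h1 : Fintype.card E = 0 := Fintype.card_eq_zero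
    omega
  have hF : Nonempty F := by
    by_contra h
    rw [not_nonempty_iff] at h
    have hE : IsEmpty E := ⟨fun e => h.false (fh e)⟩
    have hVs : ∀ a b : V, a = b := by
      intro a b
      have h3 := (Relation.reflTransGen_iff_eq
        (fun b h => by obtain ⟨e, _⟩ := h; exact hE.false e)).mp (hGconn a b)
      exact h3.symm
    have h2 : Fintype.card V ≤ 1 := Fintype.card_le_one_iff.mpr hVs
    have h0 : Fintype.card F = 0 := Fintype.card_eq_zero
    have h1 : Fintype.card E = 0 := Fintype.card_eq_zero
    omega
  obtain ⟨v0⟩ := hV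
  obtain ⟨f0⟩ := hF
  set c := Nat.card C with hc
  have hcpos : 0 < c := Nat.card_pos
  have hcardF : Nat.card (F → C) = c ^ Fintype.card F := by
    rw [Nat.card_fun, Nat.card_eq_fintype_card (α := F)]
  have hcardE : Nat.card (E → C) = c ^ Fintype.card E := by
    rw [Nat.card_fun, Nat.card_eq_fintype_card (α := E)]
  have hcardV : Nat.card (V → C) = c ^ Fintype.card V := by
    rw [Nat.card_fun, Nat.card_eq_fintype_card (α := V)]
  -- card equations
  have h1 : c ^ Fintype.card F = Nat.card (DD (C := C) fh ft).range * c := by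
    rw [← hcardF, Subgroup.card_eq_card_quotient_mul_card_subgroup (DD (C := C) fh ft).ker,
      Nat.card_congr (QuotientGroup.quotientKerEquivRange (DD (C := C) fh ft)).toEquiv,
      ker_DD_card fh ft hDconn f0]
  have h2 : c ^ Fintype.card E =
      Nat.card (PP V C).ker * Nat.card (Phi (C := C) eh et).ker := by
    rw [← hcardE, Subgroup.card_eq_card_quotient_mul_card_subgroup (Phi (C := C) eh et).ker,
      Nat.card_congr (QuotientGroup.quotientKerEquivRange (Phi (C := C) eh et)).toEquiv,
      range_phi eh et hGconn v0]
  have h4 : c ^ Fintype.card V = c * Nat.card (PP V C).ker := by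
    rw [← hcardV, Subgroup.card_eq_card_quotient_mul_card_subgroup (PP V C).ker,
      Nat.card_congr (QuotientGroup.quotientKerEquivRange (PP V C)).toEquiv,
      range_PP v0, mul_comm]
    rw [Subgroup.card_top, mul_comm]
  have hEuler' : Fintype.card V + Fintype.card F = Fintype.card E + 2 := by omega
  have key : Nat.card (DD (C := C) fh ft).range * c ^ (Fintype.card V + 1) =
      Nat.card (Phi (C := C) eh et).ker * c ^ (Fintype.card V + 1) := by
    calc Nat.card (DD (C := C) fh ft).range * c ^ (Fintype.card V + 1)
        = (Nat.card (DD (C := C) fh ft).range * c) * c ^ Fintype.card V := by ring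
      _ = c ^ Fintype.card F * c ^ Fintype.card V := by rw [h1]
      _ = c ^ (Fintype.card E + 2) := by rw [← pow_add]; rw [← hEuler']; ring_nf
      _ = c ^ Fintype.card E * c ^ 2 := by rw [pow_add]
      _ = (Nat.card (PP V C).ker * Nat.card (Phi (C := C) eh et).ker) * c ^ 2 := by rw [h2]
      _ = Nat.card (Phi (C := C) eh et).ker * ((c * Nat.card (PP V C).ker) * c) := by ring
      _ = Nat.card (Phi (C := C) eh et).ker * (c ^ Fintype.card V * c) := by rw [h4]
      _ = Nat.card (Phi (C := C) eh et).ker * c ^ (Fintype.card V + 1) := by ring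
  have hcards : Nat.card (Phi (C := C) eh et).ker ≤ Nat.card (DD (C := C) fh ft).range :=
    le_of_eq (Nat.eq_of_mul_eq_mul_right (pow_pos hcpos _) key).symm
  exact Subgroup.eq_of_le_of_card_ge (range_DD_le eh et fh ft hcirc) hcards


lemma fiber_card (fh ft : E → F)
    (hDconn : ∀ a b : F, Relation.ReflTransGen
      (fun u w => ∃ e, (ft e = u ∧ fh e = w) ∨ (ft e = w ∧ fh e = u)) a b)
    (f0 : F) {ε : E → C} (hmem : ε ∈ (DD (C := C) fh ft).range) :
    (univ.filter fun μ : F → C => DD (C := C) fh ft μ = ε).card = Fintype.card C := by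
  obtain ⟨μ0, rfl⟩ := hmem
  rw [← Finset.card_univ]
  refine Finset.card_bij' (fun μ _ => μ f0) (fun c _ => fun f => μ0 f * (c * (μ0 f0)⁻¹))
    (fun μ _ => mem_univ _) ?_ ?_ ?_
  · intro c _
    simp only [mem_filter, mem_univ, true_and]
    have : (fun f => μ0 f * (c * (μ0 f0)⁻¹)) = μ0 * (fun _ => c * (μ0 f0)⁻¹) := rfl
    rw [this, map_mul]
    have hker : (fun _ : F => c * (μ0 f0)⁻¹) ∈ (DD (C := C) fh ft).ker := by
      rw [MonoidHom.mem_ker]; funext e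
      simp only [DD, MonoidHom.coe_mk, OneHom.coe_mk, Pi.one_apply]
      group
    rw [MonoidHom.mem_ker.mp hker, mul_one]
  · intro μ hμ
    have hDμ : DD (C := C) fh ft μ = DD (C := C) fh ft μ0 := (mem_filter.mp hμ).2
    have hker : μ0⁻¹ * μ ∈ (DD (C := C) fh ft).ker := by
      rw [MonoidHom.mem_ker, map_mul, map_inv, hDμ]
      simp
    funext f
    have hcst := ker_DD_const hker (hDconn f f0)
    simp only [Pi.mul_apply, Pi.inv_apply] at hcst
    have : μ0 f * ((μ0 f)⁻¹ * μ f) = μ0 f * ((μ0 f0)⁻¹ * μ f0) := by rw [hcst]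
    simp only [mul_inv_cancel_left] at this
    show μ0 f * (μ f0 * (μ0 f0)⁻¹) = μ f
    rw [this, mul_comm (μ f0)]
  · intro c _
    simp [mul_comm, mul_assoc]

lemma sum_DD (eh et : E → V) (fh ft : E → F)
    (hDconn : ∀ a b : F, Relation.ReflTransGen
      (fun u w => ∃ e, (ft e = u ∧ fh e = w) ∨ (ft e = w ∧ fh e = u)) a b)
    (f0 : F)
    (hrange : (DD (C := C) fh ft).range = (Phi (C := C) eh et).ker)
    (W : (E → C) → ℂ) :
    ∑ μ : F → C, W (fun e => μ (fh e) * (μ (ft e))⁻¹) =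
      (Fintype.card C : ℂ) *
        ∑ ε : E → C, if (∀ v, Phi (C := C) eh et ε v = 1) then W ε else 0 := by
  have h0 : ∑ μ : F → C, W (fun e => μ (fh e) * (μ (ft e))⁻¹)
      = ∑ μ : F → C, W (DD (C := C) fh ft μ) := rfl
  rw [h0, ← sum_fiberwise_of_maps_to (g := DD (C := C) fh ft)
    (fun μ _ => mem_univ _) (fun μ => W (DD (C := C) fh ft μ))]
  rw [Finset.mul_sum]
  refine Finset.sum_congr rfl fun ε _ => ?_
  rw [mul_ite, mul_zero]
  by_cases hker : ε ∈ (Phi (C := C) eh et).ker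
  · have hcond : (∀ v, Phi (C := C) eh et ε v = 1) := by
      intro v; exact congrFun (MonoidHom.mem_ker.mp hker) v
    rw [if_pos hcond]
    have hsum : ∑ μ ∈ univ.filter fun μ : F → C => DD (C := C) fh ft μ = ε,
        W (DD (C := C) fh ft μ) =
        ∑ _μ ∈ univ.filter fun μ : F → C => DD (C := C) fh ft μ = ε, W ε :=
      Finset.sum_congr rfl fun μ hμ => by rw [(mem_filter.mp hμ).2]
    rw [hsum, Finset.sum_const, fiber_card fh ft hDconn f0 (hrange ▸ hker),
      nsmul_eq_mul]
  · have hcond : ¬ (∀ v, Phi (C := C) eh et ε v = 1) := by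
      intro hc
      exact hker (MonoidHom.mem_ker.mpr (funext fun v => hc v))
    rw [if_neg hcond]
    refine Finset.sum_eq_zero fun μ hμ => ?_
    exfalso
    exact hker (hrange ▸ ⟨μ, (mem_filter.mp hμ).2⟩)


lemma prod_ite_all {V : Type*} [Fintype V] (P : V → Prop) [DecidablePred P] (q : ℂ) :
    ∏ v, (if P v then q else 0) = if (∀ v, P v) then q ^ Fintype.card V else 0 := by
  by_cases h : ∀ v, P v
  · rw [if_pos h, Finset.prod_congr rfl fun v _ => if_pos (h v), prod_const, card_univ]
  · rw [if_neg h]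
    push_neg at h
    obtain ⟨v, hv⟩ := h
    exact Finset.prod_eq_zero (Finset.mem_univ v) (if_neg hv)

variable {X : Type*} [CommGroup X] [Fintype X] [Fintype (X →* ℂˣ)] [DecidableEq (X →* ℂˣ)]

lemma conj_char (ε : X →* ℂˣ) (x : X) :
    (starRingEnd ℂ) ((ε x : ℂˣ) : ℂ) = (((ε x)⁻¹ : ℂˣ) : ℂ) := by
  have hpow : ((ε x : ℂˣ) : ℂ) ^ Fintype.card X = 1 := by
    rw [← Units.val_pow_eq_pow_val, ← map_pow, pow_card_eq_one, map_one, Units.val_one]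
  have habs : ‖((ε x : ℂˣ) : ℂ)‖ = 1 := by
    have h2 := Complex.norm_eq_one_of_pow_eq_one hpow Fintype.card_ne_zero
    simpa using h2
  rw [← Complex.inv_eq_conj habs]
  simp

lemma sum_char (χ : X →* ℂˣ) :
    ∑ x : X, ((χ x : ℂˣ) : ℂ) = if χ = 1 then (Fintype.card X : ℂ) else 0 := by
  split_ifs with h
  · subst h; simp
  · obtain ⟨y, hy⟩ := DFunLike.ne_iff.mp h
    have hy1 : ((χ y : ℂˣ) : ℂ) ≠ 1 := by
      intro hc
      exact hy (by simpa using Units.ext hc)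
    have key : ((χ y : ℂˣ) : ℂ) * ∑ x : X, ((χ x : ℂˣ) : ℂ) = ∑ x : X, ((χ x : ℂˣ) : ℂ) := by
      rw [Finset.mul_sum]
      exact Fintype.sum_bijective (fun x => y * x) (Group.mulLeft_bijective y) _ _
        (fun x => by rw [map_mul, Units.val_mul])
    have h2 : (((χ y : ℂˣ) : ℂ) - 1) * ∑ x : X, ((χ x : ℂˣ) : ℂ) = 0 := by
      rw [sub_mul, one_mul, key, sub_self]
    rcases mul_eq_zero.mp h2 with h3 | h3
    · exact absurd (sub_eq_zero.mp h3) hy1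
    · exact h3

lemma card_char : Fintype.card (X →* ℂˣ) = Fintype.card X := by
  haveI : NeZero ((Monoid.exponent X : ℂ)) :=
    ⟨Nat.cast_ne_zero.mpr Monoid.exponent_ne_zero_of_finite⟩
  obtain ⟨e⟩ := CommGroup.monoidHom_mulEquiv_of_hasEnoughRootsOfUnity X ℂ
  exact Fintype.card_congr e.toEquiv

variable {V E : Type*} [Fintype V] [Fintype E] [DecidableEq V] [DecidableEq E]

lemma regroup (eh et : E → V) (ε : E → (X →* ℂˣ)) (σ : V → X) :
    ∏ e, ((((ε e (σ (et e)))⁻¹ : ℂˣ) : ℂ) * ((ε e (σ (eh e)) : ℂˣ) : ℂ))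
      = ∏ v, (((Phi (C := X →* ℂˣ) eh et ε v) (σ v) : ℂˣ) : ℂ) := by
  rw [Finset.prod_mul_distrib]
  rw [← Finset.prod_fiberwise_of_maps_to (fun e _ => Finset.mem_univ (et e))
      (fun e => ((((ε e (σ (et e)))⁻¹ : ℂˣ) : ℂ)))]
  rw [← Finset.prod_fiberwise_of_maps_to (fun e _ => Finset.mem_univ (eh e))
      (fun e => (((ε e (σ (eh e))) : ℂˣ) : ℂ))]
  rw [← Finset.prod_mul_distrib]
  refine Finset.prod_congr rfl fun v _ => ?_
  have h1 : ∏ e ∈ univ.filter (fun e => et e = v), ((((ε e (σ (et e)))⁻¹ : ℂˣ)) : ℂ)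
      = ∏ e ∈ univ.filter (fun e => et e = v), ((((ε e (σ v))⁻¹ : ℂˣ)) : ℂ) :=
    Finset.prod_congr rfl fun e he => by rw [(Finset.mem_filter.mp he).2]
  have h2 : ∏ e ∈ univ.filter (fun e => eh e = v), (((ε e (σ (eh e))) : ℂˣ) : ℂ)
      = ∏ e ∈ univ.filter (fun e => eh e = v), (((ε e (σ v)) : ℂˣ) : ℂ) :=
    Finset.prod_congr rfl fun e he => by rw [(Finset.mem_filter.mp he).2]
  rw [h1, h2]
  simp only [Phi, MonoidHom.coe_mk, OneHom.coe_mk]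
  rw [MonoidHom.mul_apply, MonoidHom.inv_apply, Units.val_mul]
  rw [MonoidHom.finset_prod_apply, MonoidHom.finset_prod_apply]
  rw [mul_comm]
  congr 1
  · norm_cast
  · rw [← Finset.prod_inv_distrib]
    norm_cast

end Stmt18Aux


set_option maxHeartbeats 2000000 in
/-- (Order-zero duality, generalizing Jaeger.) Let `(X, R)` be a
translation association scheme on a finite abelian group `X`, with adjacency matrices
`(A i) x y = |X|⁻¹ ∑ ε, Pch ε i * conj (ε x) * ε y`, and let the primitive idempotents
of the dual scheme `(X^*, R^*)` be `(Estar i) ε η = |X|⁻¹ * Pch (η ε⁻¹) i`. Let `G` be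
a weakly connected plane digraph with vertex set `V`, edge set `E` (head/tail `eh, et`),
face set `F`, and dual edges running from `ft e` to `fh e` (rotation of `e` by 90°
clockwise); the planar structure is encoded by connectivity of `G` and of the dual,
the circulation property of face potentials, and Euler's formula. Then the order-0
scaffold `S = ∑_{σ : V → X} ∏ e, A (lam e) (σ (et e)) (σ (eh e))` with `n = |V|` nodes
satisfies `S = |X|^{n-1} S†`, where
`S† = ∑_{μ : F → X^*} ∏ e, Estar (lam e) (μ (ft e)) (μ (fh e))` is the dual scaffold. -/
theorem stmt_18 (X : Type*) [CommGroup X] [Fintype X]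
    [Fintype (X →* ℂˣ)] [DecidableEq (X →* ℂˣ)]
    (V E F : Type*) [Fintype V] [Fintype E] [Fintype F]
    [DecidableEq V] [DecidableEq E] [DecidableEq F]
    (d : ℕ)
    (A : Fin (d + 1) → Matrix X X ℂ)
    (h01 : ∀ i x y, A i x y = 0 ∨ A i x y = 1)
    (Pch : (X →* ℂˣ) → Fin (d + 1) → ℂ)
    (hA : ∀ (i : Fin (d + 1)) (x y : X), A i x y = (Fintype.card X : ℂ)⁻¹ *
      ∑ ε : X →* ℂˣ, Pch ε i * conj ((ε x : ℂˣ) : ℂ) * ((ε y : ℂˣ) : ℂ))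
    (Estar : Fin (d + 1) → Matrix (X →* ℂˣ) (X →* ℂˣ) ℂ)
    (hEstar : ∀ (i : Fin (d + 1)) (ε η : X →* ℂˣ),
      Estar i ε η = (Fintype.card X : ℂ)⁻¹ * Pch (η * ε⁻¹) i)
    (eh et : E → V) (fh ft : E → F) (lam : E → Fin (d + 1))
    (hGconn : ∀ a b : V, Relation.ReflTransGen
      (fun u w => ∃ e, (et e = u ∧ eh e = w) ∨ (et e = w ∧ eh e = u)) a b)
    (hDconn : ∀ a b : F, Relation.ReflTransGen
      (fun u w => ∃ e, (ft e = u ∧ fh e = w) ∨ (ft e = w ∧ fh e = u)) a b)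
    (hcirc : ∀ (μ : F → (X →* ℂˣ)) (v : V),
      (∏ e ∈ Finset.univ.filter fun e => eh e = v, μ (fh e) * (μ (ft e))⁻¹)⁻¹ *
        ∏ e ∈ Finset.univ.filter fun e => et e = v, μ (fh e) * (μ (ft e))⁻¹ = 1)
    (hEuler : (Fintype.card V : ℤ) - Fintype.card E + Fintype.card F = 2) :
    ∑ σ : V → X, ∏ e, A (lam e) (σ (et e)) (σ (eh e)) =
      (Fintype.card X : ℂ) ^ ((Fintype.card V : ℤ) - 1) *
        ∑ μ : F → (X →* ℂˣ), ∏ e, Estar (lam e) (μ (ft e)) (μ (fh e)) := by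
  set q : ℂ := (Fintype.card X : ℂ) with hqdef
  have hq : q ≠ 0 := Nat.cast_ne_zero.mpr Fintype.card_ne_zero
  have hFne : Nonempty F := by
    by_contra h
    rw [not_nonempty_iff] at h
    have hE : IsEmpty E := ⟨fun e => h.false (fh e)⟩
    have hVs : ∀ a b : V, a = b := fun a b =>
      ((Relation.reflTransGen_iff_eq (fun c hc => by obtain ⟨e, _⟩ := hc; exact hE.false e)).mp
        (hGconn a b)).symm
    have h2 : Fintype.card V ≤ 1 := Fintype.card_le_one_iff.mpr hVs
    have h0 : Fintype.card F = 0 := Fintype.card_eq_zero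
    have h1 : Fintype.card E = 0 := Fintype.card_eq_zero
    omega
  obtain ⟨f0⟩ := hFne
  have hrange := Stmt18Aux.range_DD_eq (C := X →* ℂˣ) eh et fh ft hGconn hDconn hcirc hEuler
  set W : (E → (X →* ℂˣ)) → ℂ := fun ε => ∏ e, Pch (ε e) (lam e) with hW
  set Sig0 : ℂ := ∑ ε : E → (X →* ℂˣ),
    if (∀ v, Stmt18Aux.Phi (C := X →* ℂˣ) eh et ε v = 1) then W ε else 0 with hSig
  have hRHS : ∑ μ : F → (X →* ℂˣ), ∏ e, Estar (lam e) (μ (ft e)) (μ (fh e))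
      = q⁻¹ ^ Fintype.card E * (q * Sig0) := by
    have h1 : ∀ μ : F → (X →* ℂˣ), ∏ e, Estar (lam e) (μ (ft e)) (μ (fh e))
        = q⁻¹ ^ Fintype.card E * W (fun e => μ (fh e) * (μ (ft e))⁻¹) := by
      intro μ
      rw [hW]
      simp only [hEstar]
      rw [Finset.prod_mul_distrib, Finset.prod_const, Finset.card_univ]
    rw [Finset.sum_congr rfl fun μ _ => h1 μ, ← Finset.mul_sum,
      Stmt18Aux.sum_DD eh et fh ft hDconn f0 hrange W, Stmt18Aux.card_char, hSig]
  have hA' : ∀ (i) (x y : X), A i x y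
      = q⁻¹ * ∑ ε : X →* ℂˣ, Pch ε i * (((ε x)⁻¹ : ℂˣ) : ℂ) * ((ε y : ℂˣ) : ℂ) := by
    intro i x y
    rw [hA]
    congr 1
    refine Finset.sum_congr rfl fun ε _ => ?_
    rw [Stmt18Aux.conj_char]
  have hLHS : ∑ σ : V → X, ∏ e, A (lam e) (σ (et e)) (σ (eh e))
      = q⁻¹ ^ Fintype.card E * (q ^ Fintype.card V * Sig0) := by
    calc ∑ σ : V → X, ∏ e, A (lam e) (σ (et e)) (σ (eh e))
        = ∑ σ : V → X, (q⁻¹ ^ Fintype.card E *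
            ∑ ε : E → (X →* ℂˣ), ∏ e, (Pch (ε e) (lam e)
              * ((((ε e) (σ (et e)))⁻¹ : ℂˣ) : ℂ) * (((ε e) (σ (eh e)) : ℂˣ) : ℂ))) := by
          refine Finset.sum_congr rfl fun σ _ => ?_
          simp only [hA']
          rw [Finset.prod_mul_distrib, Finset.prod_const, Finset.card_univ, Fintype.prod_sum]
      _ = q⁻¹ ^ Fintype.card E * ∑ ε : E → (X →* ℂˣ), W ε *
            ∑ σ : V → X, ∏ e, (((((ε e) (σ (et e)))⁻¹ : ℂˣ) : ℂ)
              * (((ε e) (σ (eh e)) : ℂˣ) : ℂ)) := by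
          rw [← Finset.mul_sum]
          congr 1
          rw [Finset.sum_comm]
          refine Finset.sum_congr rfl fun ε _ => ?_
          rw [hW, Finset.mul_sum]
          refine Finset.sum_congr rfl fun σ _ => ?_
          rw [← Finset.prod_mul_distrib]
          exact Finset.prod_congr rfl fun e _ => by ring
      _ = q⁻¹ ^ Fintype.card E * ∑ ε : E → (X →* ℂˣ), W ε *
            (if (∀ v, Stmt18Aux.Phi (C := X →* ℂˣ) eh et ε v = 1)
              then q ^ Fintype.card V else 0) := by
          congr 1
          refine Finset.sum_congr rfl fun ε _ => ?_
          congr 1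
          calc ∑ σ : V → X, ∏ e, (((((ε e) (σ (et e)))⁻¹ : ℂˣ) : ℂ)
                * (((ε e) (σ (eh e)) : ℂˣ) : ℂ))
              = ∑ σ : V → X, ∏ v,
                  (((Stmt18Aux.Phi (C := X →* ℂˣ) eh et ε v) (σ v) : ℂˣ) : ℂ) :=
                Finset.sum_congr rfl fun σ _ => Stmt18Aux.regroup eh et ε σ
            _ = ∏ v, ∑ x : X, (((Stmt18Aux.Phi (C := X →* ℂˣ) eh et ε v) x : ℂˣ) : ℂ) :=
                (Fintype.prod_sum
                  (fun v x => (((Stmt18Aux.Phi (C := X →* ℂˣ) eh et ε v) x : ℂˣ) : ℂ))).symm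
            _ = ∏ v, (if Stmt18Aux.Phi (C := X →* ℂˣ) eh et ε v = 1 then q else 0) :=
                Finset.prod_congr rfl fun v _ => Stmt18Aux.sum_char _
            _ = if (∀ v, Stmt18Aux.Phi (C := X →* ℂˣ) eh et ε v = 1)
                  then q ^ Fintype.card V else 0 :=
                Stmt18Aux.prod_ite_all _ q
      _ = q⁻¹ ^ Fintype.card E * (q ^ Fintype.card V * Sig0) := by
          rw [hSig]
          congr 1
          rw [Finset.mul_sum]
          refine Finset.sum_congr rfl fun ε _ => ?_
          split_ifs <;> ring
  rw [hLHS, hRHS]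
  have hpow : q ^ ((Fintype.card V : ℤ) - 1) * q = q ^ Fintype.card V := by
    rw [zpow_sub_one₀ hq, zpow_natCast, mul_assoc, inv_mul_cancel₀ hq, mul_one]
  calc q⁻¹ ^ Fintype.card E * (q ^ Fintype.card V * Sig0)
      = (q ^ ((Fintype.card V : ℤ) - 1) * q) * (q⁻¹ ^ Fintype.card E * Sig0) := by
        rw [hpow]; ring
    _ = q ^ ((Fintype.card V : ℤ) - 1) * (q⁻¹ ^ Fintype.card E * (q * Sig0)) := by ring
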